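/- Let $V=[n]$ with $n \ge ra$, $r > k \ge 1$, $a \ge 3$, and $0 \le i \le (\lfloor n/(a-1) \rfloor - k)/2$. Let $\mathcal{T} = \{T_1, \ldots, T_{a-1}\}$ be a family of $(k+2i)$-element subsets of $V$ with $S := T_1 \cap T_2 \ne \emptyset$, let $s = |S|$, let $R$ be an $s$-element subset of $V \setminus (T_1 \cup \cdots \cup T_{a-1})$, and set $T_1^* = (T_1 \setminus S) \cup R$ and $\mathcal{T}^* = \{T_1^*, T_2, \ldots, T_{a-1}\}$. Then the number of $r$-element subsets of $V$ that capture $\mathcal{T}$ but do not capture $\mathcal{T}^*$ is at most the number of $r$-element subsets of $V$ that capture $\mathcal{T}^*$ but do not capture $\mathcal{T}$. -/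

import Mathlib

open Finset

lemma choose_trinom {s a b : ℕ} (hba : b ≤ a) (has : a ≤ s) :
    s.choose a * a.choose b = s.choose b * (s - b).choose (a - b) := by
  have hA := Nat.choose_mul_factorial_mul_factorial has
  have hB := Nat.choose_mul_factorial_mul_factorial hba
  have hC := Nat.choose_mul_factorial_mul_factorial (hba.trans has)
  have hD := Nat.choose_mul_factorial_mul_factorial (Nat.sub_le_sub_right has b)
  have hsa : s - b - (a - b) = s - a := by omega
  rw [hsa] at hD
  have e1 : s.choose a * a.choose b * (Nat.factorial b * (Nat.factorial (a - b) * Nat.factorial (s - a))) = Nat.factorial s := by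
    calc s.choose a * a.choose b * (Nat.factorial b * (Nat.factorial (a - b) * Nat.factorial (s - a)))
        = (a.choose b * Nat.factorial b * Nat.factorial (a - b)) * s.choose a * Nat.factorial (s - a) := by ring
      _ = Nat.factorial a * s.choose a * Nat.factorial (s - a) := by rw [hB]
      _ = s.choose a * Nat.factorial a * Nat.factorial (s - a) := by ring
      _ = Nat.factorial s := hA
  have e2 : s.choose b * (s - b).choose (a - b) * (Nat.factorial b * (Nat.factorial (a - b) * Nat.factorial (s - a))) = Nat.factorial s := by
    calc s.choose b * (s - b).choose (a - b) * (Nat.factorial b * (Nat.factorial (a - b) * Nat.factorial (s - a)))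
        = (s.choose b * Nat.factorial b) * ((s - b).choose (a - b) * Nat.factorial (a - b) * Nat.factorial (s - a)) := by ring
      _ = (s.choose b * Nat.factorial b) * Nat.factorial (s - b) := by rw [hD]
      _ = s.choose b * Nat.factorial b * Nat.factorial (s - b) := by ring
      _ = Nat.factorial s := hC
  have hpos : 0 < Nat.factorial b * (Nat.factorial (a - b) * Nat.factorial (s - a)) :=
    Nat.mul_pos (Nat.factorial_pos _) (Nat.mul_pos (Nat.factorial_pos _) (Nat.factorial_pos _))
  exact Nat.eq_of_mul_eq_mul_right hpos (e1.trans e2.symm)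

lemma core_lym {V : Type*} [DecidableEq V] (S : Finset V)
    (A : Finset (Finset V)) (hdown : ∀ X ∈ A, ∀ Y ⊆ X, Y ∈ A)
    (hsub : ∀ X ∈ A, X ⊆ S) (a b : ℕ) (hba : b ≤ a) :
    (A.filter (fun X => X.card = a)).card * (S.card.choose b)
      ≤ (A.filter (fun X => X.card = b)).card * (S.card.choose a) := by
  rcases (A.filter (fun X => X.card = a)).eq_empty_or_nonempty with he | ⟨W, hW⟩
  · simp [he]
  have hWA : W ∈ A ∧ W.card = a := by simpa using hW
  have has : a ≤ S.card := by
    rw [← hWA.2]; exact card_le_card (hsub W hWA.1)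
  -- double count
  have hdc : (A.filter (fun X => X.card = a)).card * a.choose b
      ≤ (A.filter (fun X => X.card = b)).card * ((S.card - b).choose (a - b)) := by
    classical
    apply Finset.card_mul_le_card_mul (fun X Y => Y ⊆ X)
    · intro X hX
      have hX' : X ∈ A ∧ X.card = a := by simpa using hX
      have : X.powersetCard b ⊆ (A.filter (fun Y => Y.card = b)).bipartiteAbove (fun X Y => Y ⊆ X) X := by
        intro Y hY
        rw [Finset.mem_powersetCard] at hY
        simp only [Finset.bipartiteAbove, mem_filter]
        exact ⟨⟨hdown X hX'.1 Y hY.1, hY.2⟩, hY.1⟩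
      calc a.choose b = (X.powersetCard b).card := by rw [card_powersetCard, hX'.2]
        _ ≤ _ := card_le_card this
    · intro Y hY
      have hY' : Y ∈ A ∧ Y.card = b := by simpa using hY
      have hinj : ∀ X ∈ (A.filter (fun X => X.card = a)).bipartiteBelow (fun X Y => Y ⊆ X) Y,
          X \ Y ∈ (S \ Y).powersetCard (a - b) := by
        intro X hX
        simp only [Finset.bipartiteBelow, mem_filter] at hX
        rw [Finset.mem_powersetCard]
        constructor
        · exact sdiff_subset_sdiff (hsub X hX.1.1) le_rfl
        · rw [card_sdiff_of_subset hX.2, hX.1.2, hY'.2]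
      calc ((A.filter (fun X => X.card = a)).bipartiteBelow (fun X Y => Y ⊆ X) Y).card
          ≤ ((S \ Y).powersetCard (a - b)).card := by
            apply Finset.card_le_card_of_injOn (fun X => X \ Y) hinj
            intro X1 h1 X2 h2 hEq
            simp only [Finset.bipartiteBelow, coe_filter, Set.mem_setOf_eq, mem_filter] at h1 h2
            have heq2 : X1 \ Y ∪ Y = X2 \ Y ∪ Y := by
              simp only at hEq; rw [hEq]
            rwa [sdiff_union_of_subset h1.2, sdiff_union_of_subset h2.2] at heq2
        _ = (S.card - b).choose (a - b) := by
            rw [card_powersetCard, card_sdiff_of_subset (hsub Y hY'.1), hY'.2]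
  have hfin : (A.filter (fun X => X.card = a)).card * S.card.choose b * (a.choose b)
      ≤ (A.filter (fun X => X.card = b)).card * S.card.choose a * (a.choose b) := by
    calc (A.filter (fun X => X.card = a)).card * S.card.choose b * (a.choose b)
          = (A.filter (fun X => X.card = a)).card * a.choose b * S.card.choose b := by ring
      _ ≤ (A.filter (fun X => X.card = b)).card * ((S.card - b).choose (a - b)) * S.card.choose b := by
          exact Nat.mul_le_mul_right _ hdc
      _ = (A.filter (fun X => X.card = b)).card * (S.card.choose b * (S.card - b).choose (a - b)) := by ring
      _ = (A.filter (fun X => X.card = b)).card * (S.card.choose a * a.choose b) := by rw [← choose_trinom hba has]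
      _ = (A.filter (fun X => X.card = b)).card * S.card.choose a * a.choose b := by ring
  exact Nat.le_of_mul_le_mul_right hfin (Nat.choose_pos hba)


set_option maxHeartbeats 4000000 in
theorem stmt_2 (n r k a i : ℕ) (hn : r * a ≤ n) (hk : 1 ≤ k) (hkr : k < r) (ha : 3 ≤ a)
    (hi : k + 2 * i ≤ n / (a - 1))
    (T : Fin (a - 1) → Finset (Fin n))
    (hT : ∀ j, (T j).card = k + 2 * i)
    (S R : Finset (Fin n))
    (hS : S = T ⟨0, by omega⟩ ∩ T ⟨1, by omega⟩)
    (hSne : S.Nonempty)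
    (hR : R.card = S.card)
    (hRdisj : ∀ j, Disjoint R (T j))
    (Tstar : Fin (a - 1) → Finset (Fin n))
    (hTstar : Tstar = Function.update T ⟨0, by omega⟩ ((T ⟨0, by omega⟩ \ S) ∪ R)) :
    ((Finset.powersetCard r (Finset.univ : Finset (Fin n))).filter
        (fun E => (∃ j, k + i ≤ (E ∩ T j).card) ∧ ¬ (∃ j, k + i ≤ (E ∩ Tstar j).card))).card ≤
      ((Finset.powersetCard r (Finset.univ : Finset (Fin n))).filter
        (fun E => (∃ j, k + i ≤ (E ∩ Tstar j).card) ∧ ¬ (∃ j, k + i ≤ (E ∩ T j).card))).card := by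
  classical
  have ha1 : 0 < a - 1 := by omega
  have ha2 : 1 < a - 1 := by omega
  set ι0 : Fin (a - 1) := ⟨0, ha1⟩ with hι0
  set T0 : Finset (Fin n) := T ι0 with hT0def
  set T0s : Finset (Fin n) := (T0 \ S) ∪ R with hT0sdef
  have hSsub : S ⊆ T0 := by
    rw [hS]; exact inter_subset_left
  have hRT0 : Disjoint R T0 := hRdisj ι0
  have hRS : Disjoint S R := ((hRdisj ι0).mono_right hSsub).symm
  have hup0 : Tstar ι0 = T0s := by
    rw [hTstar]; exact Function.update_self _ _ _
  have hupj : ∀ j, j ≠ ι0 → Tstar j = T j := by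
    intro j hj; rw [hTstar]; exact Function.update_of_ne hj _ _
  set key : Finset (Fin n) → Finset (Fin n) × ℕ :=
    fun E => (E \ (S ∪ R), (E ∩ S).card) with hkeydef
  set L : Finset (Finset (Fin n)) :=
    (Finset.powersetCard r (Finset.univ : Finset (Fin n))).filter
      (fun E => (∃ j, k + i ≤ (E ∩ T j).card) ∧ ¬ (∃ j, k + i ≤ (E ∩ Tstar j).card)) with hLdef
  set RR : Finset (Finset (Fin n)) :=
    (Finset.powersetCard r (Finset.univ : Finset (Fin n))).filter
      (fun E => (∃ j, k + i ≤ (E ∩ Tstar j).card) ∧ ¬ (∃ j, k + i ≤ (E ∩ T j).card)) with hRRdef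
  have memL : ∀ E : Finset (Fin n), E ∈ L ↔
      E.card = r ∧ (∀ j, j ≠ ι0 → (E ∩ T j).card < k + i) ∧
        k + i ≤ (E ∩ T0).card ∧ (E ∩ T0s).card < k + i := by
    intro E
    rw [hLdef, mem_filter, Finset.mem_powersetCard_univ]
    constructor
    · rintro ⟨hcard, ⟨j, hj⟩, hall⟩
      push_neg at hall
      refine ⟨hcard, fun j' hj' => by have := hall j'; rwa [hupj j' hj'] at this, ?_, ?_⟩
      · by_cases hjι : j = ι0
        · rwa [hjι] at hj
        · exact absurd hj (by have := hall j; rw [hupj j hjι] at this; omega)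
      · have := hall ι0; rwa [hup0] at this
    · rintro ⟨h1, h2, h3, h4⟩
      refine ⟨h1, ⟨ι0, h3⟩, ?_⟩
      push_neg
      intro j
      by_cases hj : j = ι0
      · subst hj; rwa [hup0]
      · rw [hupj j hj]; exact h2 j hj
  have memR : ∀ E : Finset (Fin n), E ∈ RR ↔
      E.card = r ∧ (∀ j, j ≠ ι0 → (E ∩ T j).card < k + i) ∧
        k + i ≤ (E ∩ T0s).card ∧ (E ∩ T0).card < k + i := by
    intro E
    rw [hRRdef, mem_filter, Finset.mem_powersetCard_univ]
    constructor
    · rintro ⟨hcard, ⟨j, hj⟩, hall⟩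
      push_neg at hall
      refine ⟨hcard, fun j' _ => hall j', ?_, hall ι0⟩
      by_cases hjι : j = ι0
      · rw [hjι, hup0] at hj; exact hj
      · rw [hupj j hjι] at hj; exact absurd hj (by have := hall j; omega)
    · rintro ⟨h1, h2, h3, h4⟩
      refine ⟨h1, ⟨ι0, by rwa [hup0]⟩, ?_⟩
      push_neg
      intro j
      by_cases hj : j = ι0
      · subst hj; exact h4
      · exact h2 j hj
  have hsplit : ∀ E : Finset (Fin n),
      E.card = (E \ (S ∪ R)).card + ((E ∩ S).card + (E ∩ R).card) := by
    intro E
    have h1 : (E \ (S ∪ R)).card + (E ∩ (S ∪ R)).card = E.card :=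
      card_sdiff_add_card_inter E (S ∪ R)
    have h2 : E ∩ (S ∪ R) = (E ∩ S) ∪ (E ∩ R) := inter_union_distrib_left E S R
    have h3 : Disjoint (E ∩ S) (E ∩ R) :=
      hRS.mono inter_subset_right inter_subset_right
    rw [← h1, h2, card_union_of_disjoint h3]
  have main : ∀ p ∈ L.image key,
      (L.filter (fun E => key E = p)).card ≤
        (RR.filter (fun E => key E = (p.1, r - p.1.card - p.2))).card := by
    rintro ⟨E₀, aa⟩ hp
    obtain ⟨E, hEL, hkeyE⟩ := mem_image.mp hp
    rw [hkeydef, Prod.mk.injEq] at hkeyE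
    obtain ⟨hE0, haa⟩ := hkeyE
    set bb : ℕ := (E ∩ R).card with hbbdef
    have hELs := (memL E).mp hEL
    have hsum : E₀.card + (aa + bb) = r := by
      rw [← hE0, ← haa, hbbdef, ← hsplit E, hELs.1]
    have hE0disj : Disjoint E₀ (S ∪ R) := hE0 ▸ sdiff_disjoint
    have hE0S : Disjoint E₀ S := hE0disj.mono_right subset_union_left
    have hE0R : Disjoint E₀ R := hE0disj.mono_right subset_union_right
    set m0 : ℕ := (E₀ ∩ T0).card with hm0def
    -- decomposition facts for arbitrary E' in the fiber
    have hdecomp : ∀ E' : Finset (Fin n), E' \ (S ∪ R) = E₀ →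
        E' = E₀ ∪ (E' ∩ S) ∪ (E' ∩ R) := by
      intro E' hE'
      ext x
      rw [← hE']
      simp only [mem_union, mem_sdiff, mem_inter]
      tauto
    have c0 : ∀ E' : Finset (Fin n), E' \ (S ∪ R) = E₀ →
        (E' ∩ T0).card = m0 + (E' ∩ S).card := by
      intro E' hE'
      have hset : E' ∩ T0 = (E₀ ∩ T0) ∪ (E' ∩ S) := by
        ext x
        have h1 : x ∈ S → x ∈ T0 := fun h => hSsub h
        have h2 : x ∈ R → x ∉ T0 := fun h => Finset.disjoint_left.mp hRT0 h
        rw [← hE']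
        simp only [mem_inter, mem_union, mem_sdiff]
        tauto
      rw [hset, card_union_of_disjoint (hE0S.mono inter_subset_left inter_subset_right)]
    have c0s : ∀ E' : Finset (Fin n), E' \ (S ∪ R) = E₀ →
        (E' ∩ T0s).card = m0 + (E' ∩ R).card := by
      intro E' hE'
      have hset : E' ∩ T0s = (E₀ ∩ T0) ∪ (E' ∩ R) := by
        ext x
        have h1 : x ∈ S → x ∈ T0 := fun h => hSsub h
        have h2 : x ∈ R → x ∉ T0 := fun h => Finset.disjoint_left.mp hRT0 h
        have h3 : x ∈ S → x ∉ R := fun h => Finset.disjoint_left.mp hRS h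
        rw [← hE', hT0sdef]
        simp only [mem_inter, mem_union, mem_sdiff]
        tauto
      rw [hset, card_union_of_disjoint (hE0R.mono inter_subset_left inter_subset_right)]
    have cj : ∀ E' : Finset (Fin n), E' \ (S ∪ R) = E₀ → ∀ j : Fin (a - 1),
        E' ∩ T j = (E₀ ∪ (E' ∩ S)) ∩ T j := by
      intro E' hE' j
      ext x
      have h2 : x ∈ R → x ∉ T j := fun h => Finset.disjoint_left.mp (hRdisj j) h
      rw [← hE']
      simp only [mem_inter, mem_union, mem_sdiff]
      tauto
    set G : Finset (Fin n) → Prop :=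
      fun A => ∀ j, j ≠ ι0 → ((E₀ ∪ A) ∩ T j).card < k + i with hGdef
    set 𝒜 : Finset (Finset (Fin n)) := S.powerset.filter G with h𝒜def
    -- threshold facts from the witness E
    have ht1 : k + i ≤ m0 + aa := by
      have h := c0 E hE0; rw [haa] at h
      have := hELs.2.2.1; omega
    have ht2 : m0 + bb < k + i := by
      have h := c0s E hE0
      have := hELs.2.2.2; omega
    have hbba : bb ≤ aa := by omega
    -- reconstruction facts
    have hrecon : ∀ A B : Finset (Fin n), A ⊆ S → B ⊆ R →
        (E₀ ∪ A ∪ B) \ (S ∪ R) = E₀ ∧ (E₀ ∪ A ∪ B) ∩ S = A ∧ (E₀ ∪ A ∪ B) ∩ R = B := by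
      intro A B hAS hBR
      have hxE0 : ∀ z, z ∈ E₀ → z ∉ S ∧ z ∉ R := fun z hz =>
        ⟨fun h => disjoint_left.mp hE0S hz h, fun h => disjoint_left.mp hE0R hz h⟩
      have hxSR : ∀ z, z ∈ S → z ∉ R := fun z hz h => disjoint_left.mp hRS hz h
      refine ⟨?_, ?_, ?_⟩ <;>
      · ext z
        have h1 : z ∈ A → z ∈ S := fun hz => hAS hz
        have h2 : z ∈ B → z ∈ R := fun hz => hBR hz
        have h3 := hxE0 z
        have h4 := hxSR z
        simp only [mem_union, mem_sdiff, mem_inter]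
        tauto
    -- the fiber cardinality formula
    have hfib : ∀ x y : ℕ, E₀.card + (x + y) = r →
        ((Finset.powersetCard r (Finset.univ : Finset (Fin n))).filter
            (fun E' => E' \ (S ∪ R) = E₀ ∧ (E' ∩ S).card = x ∧ G (E' ∩ S))).card
          = (𝒜.filter (fun X => X.card = x)).card * (S.card.choose y) := by
      intro x y hxy
      have hcardt : ((𝒜.filter (fun X => X.card = x)) ×ˢ R.powersetCard y).card
          = (𝒜.filter (fun X => X.card = x)).card * (S.card.choose y) := by
        rw [Finset.card_product, Finset.card_powersetCard, hR]
      rw [← hcardt]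
      apply Finset.card_nbij' (fun E' => (E' ∩ S, E' ∩ R)) (fun q => E₀ ∪ q.1 ∪ q.2)
      · intro E' hE'
        rw [Finset.mem_coe, mem_filter, Finset.mem_powersetCard_univ] at hE'
        obtain ⟨hcard, hE'0, hx, hG'⟩ := hE'
        have hREq : (E' ∩ R).card = y := by
          have := hsplit E'
          rw [hE'0, hx, hcard] at this
          omega
        rw [Finset.mem_coe, Finset.mem_product]
        constructor
        · rw [mem_filter, h𝒜def, mem_filter, mem_powerset]
          exact ⟨⟨inter_subset_right, hG'⟩, hx⟩
        · rw [Finset.mem_powersetCard]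
          exact ⟨inter_subset_right, hREq⟩
      · rintro ⟨A, B⟩ hq
        rw [Finset.mem_coe, Finset.mem_product, mem_filter, h𝒜def, mem_filter, mem_powerset,
          Finset.mem_powersetCard] at hq
        obtain ⟨⟨⟨hAS, hGA⟩, hAx⟩, hBR, hBy⟩ := hq
        obtain ⟨hr0, hrS, hrR⟩ := hrecon A B hAS hBR
        have hcard : (E₀ ∪ A ∪ B).card = r := by
          have hd1 : Disjoint E₀ A := hE0S.mono_right hAS
          have hd2 : Disjoint (E₀ ∪ A) B :=
            disjoint_union_left.mpr ⟨hE0R.mono_right hBR, (hRS.mono hAS hBR)⟩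
          rw [card_union_of_disjoint hd2, card_union_of_disjoint hd1, hAx, hBy]
          omega
        rw [Finset.mem_coe, mem_filter, Finset.mem_powersetCard_univ, hrS]
        exact ⟨hcard, hr0, hAx, hGA⟩
      · intro E' hE'
        rw [Finset.mem_coe, mem_filter] at hE'
        exact (hdecomp E' hE'.2.1).symm
      · rintro ⟨A, B⟩ hq
        rw [Finset.mem_coe, Finset.mem_product, mem_filter, h𝒜def, mem_filter, mem_powerset,
          Finset.mem_powersetCard] at hq
        obtain ⟨⟨⟨hAS, hGA⟩, hAx⟩, hBR, hBy⟩ := hq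
        obtain ⟨hr0, hrS, hrR⟩ := hrecon A B hAS hBR
        simp only [hrS, hrR]
    -- identify the two fibers
    have claim1 : L.filter (fun E' => key E' = (E₀, aa)) =
        (Finset.powersetCard r (Finset.univ : Finset (Fin n))).filter
          (fun E' => E' \ (S ∪ R) = E₀ ∧ (E' ∩ S).card = aa ∧ G (E' ∩ S)) := by
      ext E'
      rw [mem_filter, memL E', mem_filter, Finset.mem_powersetCard_univ]
      simp only [hkeydef, Prod.mk.injEq]
      constructor
      · rintro ⟨⟨h1, h2, h3, h4⟩, h5, h6⟩
        exact ⟨h1, h5, h6, fun j hj => by rw [← cj E' h5 j]; exact h2 j hj⟩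
      · rintro ⟨h1, h5, h6, hG'⟩
        have hRc : (E' ∩ R).card = bb := by
          have := hsplit E'
          rw [h5, h6, h1] at this
          omega
        refine ⟨⟨h1, fun j hj => by rw [cj E' h5 j]; exact hG' j hj, ?_, ?_⟩, h5, h6⟩
        · rw [c0 E' h5, h6]; exact ht1
        · rw [c0s E' h5, hRc]; exact ht2
    have claim2 : RR.filter (fun E' => key E' = (E₀, bb)) =
        (Finset.powersetCard r (Finset.univ : Finset (Fin n))).filter
          (fun E' => E' \ (S ∪ R) = E₀ ∧ (E' ∩ S).card = bb ∧ G (E' ∩ S)) := by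
      ext E'
      rw [mem_filter, memR E', mem_filter, Finset.mem_powersetCard_univ]
      simp only [hkeydef, Prod.mk.injEq]
      constructor
      · rintro ⟨⟨h1, h2, h3, h4⟩, h5, h6⟩
        exact ⟨h1, h5, h6, fun j hj => by rw [← cj E' h5 j]; exact h2 j hj⟩
      · rintro ⟨h1, h5, h6, hG'⟩
        have hRc : (E' ∩ R).card = aa := by
          have := hsplit E'
          rw [h5, h6, h1] at this
          omega
        refine ⟨⟨h1, fun j hj => by rw [cj E' h5 j]; exact hG' j hj, ?_, ?_⟩, h5, h6⟩
        · rw [c0s E' h5, hRc]; exact ht1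
        · rw [c0 E' h5, h6]; exact ht2
    have hdown : ∀ X ∈ 𝒜, ∀ Y ⊆ X, Y ∈ 𝒜 := by
      intro X hX Y hYX
      rw [h𝒜def, mem_filter, mem_powerset] at hX ⊢
      refine ⟨hYX.trans hX.1, fun j hj => ?_⟩
      exact lt_of_le_of_lt
        (card_le_card (inter_subset_inter (union_subset_union_right hYX) Finset.Subset.rfl))
        (hX.2 j hj)
    have hsub𝒜 : ∀ X ∈ 𝒜, X ⊆ S := fun X hX =>
      mem_powerset.mp (mem_filter.mp (h𝒜def ▸ hX)).1
    have hkey2 : (((E₀, aa) : Finset (Fin n) × ℕ).1,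
        r - ((E₀, aa) : Finset (Fin n) × ℕ).1.card - ((E₀, aa) : Finset (Fin n) × ℕ).2)
        = ((E₀, bb) : Finset (Fin n) × ℕ) := by
      simp only [Prod.mk.injEq]
      exact ⟨trivial, by omega⟩
    rw [hkey2, claim1, claim2, hfib aa bb (by omega), hfib bb aa (by omega)]
    exact core_lym S 𝒜 hdown hsub𝒜 aa bb hbba
  -- assemble
  have hbound : ∀ p ∈ L.image key, p.1.card + p.2 ≤ r := by
    intro p hp
    obtain ⟨E, hEL, hkE⟩ := mem_image.mp hp
    have h1 := (memL E).mp hEL |>.1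
    have h2 := hsplit E
    rw [← hkE, hkeydef]
    simp only
    omega
  have hinj : ∀ p ∈ L.image key, ∀ p' ∈ L.image key,
      ((p.1, r - p.1.card - p.2) : Finset (Fin n) × ℕ) =
        (p'.1, r - p'.1.card - p'.2) → p = p' := by
    intro p hp p' hp' h
    simp only [Prod.mk.injEq] at h
    obtain ⟨hf, hs⟩ := h
    have b1 := hbound p hp
    have b2 := hbound p' hp'
    rw [Prod.ext_iff]
    refine ⟨hf, ?_⟩
    rw [hf] at b1 hs
    omega
  set Q : Finset (Finset (Fin n) × ℕ) :=
    (L.image key).image (fun p => (p.1, r - p.1.card - p.2)) with hQdef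
  calc L.card = ∑ p ∈ L.image key, (L.filter (fun E => key E = p)).card :=
      card_eq_sum_card_fiberwise (fun E hE => mem_image_of_mem key hE)
    _ ≤ ∑ p ∈ L.image key,
        (RR.filter (fun E => key E = (p.1, r - p.1.card - p.2))).card :=
      Finset.sum_le_sum main
    _ = ∑ q ∈ Q, (RR.filter (fun E => key E = q)).card := by
        rw [hQdef]
        exact (Finset.sum_image (f := fun q => (RR.filter (fun E => key E = q)).card)
          (g := fun p : Finset (Fin n) × ℕ => (p.1, r - p.1.card - p.2)) hinj).symm
    _ = (Q.biUnion (fun q => RR.filter (fun E => key E = q))).card := by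
        refine (Finset.card_biUnion ?_).symm
        intro q hq q' hq' hne
        rw [Function.onFun, Finset.disjoint_left]
        intro E hE hE'
        have h1 := (mem_filter.mp hE).2
        have h2 := (mem_filter.mp hE').2
        exact hne (h1 ▸ h2 ▸ rfl)
    _ ≤ RR.card := card_le_card (Finset.biUnion_subset.mpr (fun q _ => filter_subset _ _))
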